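/- arXiv:2311.18639 — 2 statements merged into one kernel-verified Lean document; each statement's English description precedes it below -/
import Mathlib

section
/- In the setting of the previous covariance computation, if additionally α τ̄₁ = A_{0Ω}ᵀ(I-A₀₀)^{-⊤}τ̄₀ for a scalar α, then the conditional variance of Y given Z₁ equals τ̄₀ᵀ(I-A₀₀)^{-1} Σ_{π(0)} (I-A₀₀)^{-⊤} τ̄₀, i.e. it is independent of the intervention i and depends only on the exogenous noise feeding π(0). -/
open Matrix

/-- Conditional variance of the target given the learned cause: in the block-triangular
linear Gaussian SCM, if `A₀Ωᵀ (I-A₀₀)⁻ᵀ τ̄₀ = α τ̄₁` for a scalar `α`, then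
`Var(Y | Z₁) = Var(Y) - Cov(Y,Z₁)²/Var(Z₁)` equals
`τ̄₀ᵀ (I-A₀₀)⁻¹ Σ_{π(0)} (I-A₀₀)⁻ᵀ τ̄₀`, independently of the intervention: it depends
only on the exogenous noise feeding `π(0)`. -/
theorem tcr_conditional_variance {N0 N1 : ℕ}
    (A00 : Matrix (Fin N0) (Fin N0) ℝ) (A0O : Matrix (Fin N0) (Fin N1) ℝ)
    (AOO : Matrix (Fin N1) (Fin N1) ℝ)
    (S0 : Matrix (Fin N0) (Fin N0) ℝ) (SO : Matrix (Fin N1) (Fin N1) ℝ)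
    (τb0 : Fin N0 → ℝ) (τb1 : Fin N1 → ℝ) (α : ℝ)
    (hα : A0Oᵀ.mulVec ((((1 - A00)⁻¹)ᵀ).mulVec τb0) = α • τb1)
    -- Var(Y), Var(Z₁) and Cov(Y, Z₁) of the Gaussian vector (Y, Z₁):
    (vY vZ c : ℝ)
    (hvY : vY = τb0 ⬝ᵥ ((1 - A00)⁻¹ * S0 * ((1 - A00)⁻¹)ᵀ).mulVec τb0 +
      ((((1 - A00)⁻¹ * A0O * (1 - AOO)⁻¹)ᵀ).mulVec τb0) ⬝ᵥ
        SO.mulVec ((((1 - A00)⁻¹ * A0O * (1 - AOO)⁻¹)ᵀ).mulVec τb0))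
    (hvZ : vZ = ((((1 - AOO)⁻¹)ᵀ).mulVec τb1) ⬝ᵥ SO.mulVec ((((1 - AOO)⁻¹)ᵀ).mulVec τb1))
    (hc : c = τb0 ⬝ᵥ ((1 - A00)⁻¹ * A0O * (1 - AOO)⁻¹ * SO * ((1 - AOO)⁻¹)ᵀ).mulVec τb1)
    (hvZ_pos : 0 < vZ) :
    vY - c ^ 2 / vZ = τb0 ⬝ᵥ ((1 - A00)⁻¹ * S0 * ((1 - A00)⁻¹)ᵀ).mulVec τb0 := by
  set w : Fin N1 → ℝ := (((1 - AOO)⁻¹)ᵀ).mulVec τb1 with hw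
  have key : (((1 - A00)⁻¹ * A0O * (1 - AOO)⁻¹)ᵀ).mulVec τb0 = α • w := by
    rw [transpose_mul, transpose_mul, ← mulVec_mulVec, ← mulVec_mulVec, hα, hw,
      mulVec_smul]
  have hvY' : vY = τb0 ⬝ᵥ ((1 - A00)⁻¹ * S0 * ((1 - A00)⁻¹)ᵀ).mulVec τb0 +
      α ^ 2 * vZ := by
    rw [hvY, key, hvZ, mulVec_smul, smul_dotProduct, dotProduct_smul]
    simp only [smul_eq_mul]; ring
  have hc' : c = α * vZ := by
    have : c = ((((1 - A00)⁻¹ * A0O * (1 - AOO)⁻¹)ᵀ).mulVec τb0) ⬝ᵥ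
        SO.mulVec w := by
      rw [hc, hw]
      rw [show (1 - A00)⁻¹ * A0O * (1 - AOO)⁻¹ * SO * ((1 - AOO)⁻¹)ᵀ
        = ((1 - A00)⁻¹ * A0O * (1 - AOO)⁻¹) * (SO * ((1 - AOO)⁻¹)ᵀ) from Matrix.mul_assoc _ _ _]
      rw [← mulVec_mulVec, dotProduct_mulVec, ← mulVec_transpose, ← mulVec_mulVec]
    rw [this, key, smul_dotProduct, hvZ, smul_eq_mul]
  rw [hvY', hc']
  field_simp
  ring
end

section
/- Non-identifiability with unintervened mediators: consider the linear chain SCM X₁ → X₂ → X₃ → X₄ = Y with unit coefficients and independent nondegenerate Gaussian noise, where shift interventions act only on X₁ and X₂ (i₃ = i₄ = 0). Then there exist two distinct (not proportional) linear reductions (τ, ω) achieving exact interventional consistency: one with τ₁ proportional to the indicator of X₃ and one with τ₁ proportional to the indicator of X₂, each with suitable ω putting weight only on intervened nodes; hence the 1-cause TCR is not unique up to scaling. -/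
open Matrix Finset

/-- Solution of the chain SCM `X₁ → X₂ → X₃ → X₄` with unit coefficients, where shift
interventions `i = (i₁, i₂)` act only on `X₁` and `X₂`. -/
def chainX (U : Fin 4 → ℝ) (i : Fin 2 → ℝ) : Fin 4 → ℝ := fun k =>
  match k with
  | 0 => U 0 + i 0
  | 1 => U 0 + i 0 + U 1 + i 1
  | 2 => U 0 + i 0 + U 1 + i 1 + U 2
  | 3 => U 0 + i 0 + U 1 + i 1 + U 2 + U 3

/-- Target `Y = X₄`. -/
def chainY (U : Fin 4 → ℝ) (i : Fin 2 → ℝ) : ℝ := chainX U i 3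

/-- Exact interventional consistency of a linear reduction `(τ, ω)` for the chain SCM
with independent Gaussian noise `U_k ~ N(0, σ_k²)`: the high-level cause
`Z₁ = τᵀ X` is shifted by exactly `ωᵀ i` under every intervention `i`; the target
satisfies the unintervened high-level mechanism `Y = α Z₁ + β + R₀` for all `U, i`,
where the exogenous residual `R₀(U) = Y(U,0) - α Z₁(U,0) - β` does not depend on `i`;
and `R₀` is independent of `Z₁` (for jointly Gaussian variables: zero covariance,
expressed through the linear coefficients extracted on the standard basis). -/
def ExactReduction (σ : Fin 4 → ℝ) (τ : Fin 4 → ℝ) (ω : Fin 2 → ℝ) : Prop :=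
  ∃ α β : ℝ,
    (∀ (U : Fin 4 → ℝ) (i : Fin 2 → ℝ),
      τ ⬝ᵥ chainX U i = τ ⬝ᵥ chainX U 0 + ω ⬝ᵥ i) ∧
    (∀ (U : Fin 4 → ℝ) (i : Fin 2 → ℝ),
      chainY U i = α * (τ ⬝ᵥ chainX U i) + β
        + (chainY U 0 - α * (τ ⬝ᵥ chainX U 0) - β)) ∧
    (∑ k : Fin 4, σ k ^ 2 *
        ((chainY (Pi.single k 1) 0 - α * (τ ⬝ᵥ chainX (Pi.single k 1) 0))
          - (chainY 0 0 - α * (τ ⬝ᵥ chainX 0 0))) *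
        ((τ ⬝ᵥ chainX (Pi.single k 1) 0) - τ ⬝ᵥ chainX 0 0)) = 0

/-- Non-identifiability with unintervened mediators: for the unit chain
`X₁ → X₂ → X₃ → X₄ = Y` with nondegenerate independent Gaussian noise and interventions
acting only on `X₁, X₂`, there exist two exactly consistent linear reductions that are
not proportional: one with `τ₁` proportional to the indicator of `X₃` and one with `τ₁`
proportional to the indicator of `X₂`. Hence the 1-cause TCR is not unique up to
scaling. -/
theorem tcr_not_identifiable_with_unintervened_mediators
    (σ : Fin 4 → ℝ) (hσ : ∀ k, 0 < σ k) :
    ∃ (τ τ' : Fin 4 → ℝ) (ω ω' : Fin 2 → ℝ) (c c' : ℝ),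
      c ≠ 0 ∧ c' ≠ 0 ∧
      τ = c • (Pi.single (2 : Fin 4) (1 : ℝ) : Fin 4 → ℝ) ∧
      τ' = c' • (Pi.single (1 : Fin 4) (1 : ℝ) : Fin 4 → ℝ) ∧
      ExactReduction σ τ ω ∧ ExactReduction σ τ' ω' ∧
      (¬∃ d : ℝ, τ' = d • τ) ∧ (¬∃ d : ℝ, τ = d • τ') := by
  refine ⟨Pi.single 2 1, Pi.single 1 1, ![1, 1], ![1, 1], 1, 1, one_ne_zero, one_ne_zero,
    (one_smul _ _).symm, (one_smul _ _).symm, ?_, ?_, ?_, ?_⟩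
  · refine ⟨1, 0, ?_, ?_, ?_⟩
    · intro U i
      simp [chainX, dotProduct, Fin.sum_univ_four, Fin.sum_univ_two]
      ring
    · intro U i
      simp [chainX, chainY, dotProduct, Fin.sum_univ_four]
    · simp [chainX, chainY, dotProduct, Fin.sum_univ_four, Pi.single_apply]
  · refine ⟨1, 0, ?_, ?_, ?_⟩
    · intro U i
      simp [chainX, dotProduct, Fin.sum_univ_four, Fin.sum_univ_two]
      ring
    · intro U i
      simp [chainX, chainY, dotProduct, Fin.sum_univ_four]
      ring
    · simp [chainX, chainY, dotProduct, Fin.sum_univ_four, Pi.single_apply]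
  · rintro ⟨d, hd⟩
    have := congrFun hd 1
    simp [Pi.single_apply] at this
  · rintro ⟨d, hd⟩
    have := congrFun hd 2
    simp [Pi.single_apply] at this
end
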